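/- Let H_m (m ≥ 4) be the 4-graph on Z/m × (Z/2)⁶ defined in Section 7. If A is an independent set of vertices in H_m, then Σ_{i∈Z/m} ε_i(A) + Σ_{i∈Z/m} Σ_{x∈(Z/2)²} |A₂(i,x)| ≤ 2m + Σ_{i∈Z/m} χ[A₁(i) ≠ ∅]. -/

import Mathlib

open Finset

abbrev G2 := ZMod 2 × ZMod 2

/-- Vertices of the 4-graph `H_m`: elements `(i, x, y, z)` of `ℤ/m ⊕ (ℤ/2)⁶`. -/
abbrev HVtx (m : ℕ) := ZMod m × G2 × G2 × G2

/-- Edge predicate of the 4-graph `H_m` on `ℤ/m ⊕ (ℤ/2)⁶` (edge types 1, 2, 3,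
4a, 4b, 4c of Section 7). -/
def IsHmEdge {m : ℕ} (e : Finset (HVtx m)) : Prop :=
  e.card = 4 ∧ (
  -- type 1
  (∃ (i : ZMod m) (x y : G2) (z₁ z₂ z₃ z₄ : G2),
     e = {(i, x, y, z₁), (i, x, y, z₂), (i, x, y, z₃), (i, x, y, z₄)}) ∨
  -- type 2
  (∃ (i : ZMod m) (x₁ y₁ z₁ x₂ y₂ z₂ x₃ y₃ z₃ x₄ y₄ z₄ : G2),
     x₁ + x₂ + x₃ + x₄ = 0 ∧
     (x₁, y₁) ≠ (x₂, y₂) ∧ (x₁, y₁) ≠ (x₃, y₃) ∧ (x₁, y₁) ≠ (x₄, y₄) ∧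
     (x₂, y₂) ≠ (x₃, y₃) ∧ (x₂, y₂) ≠ (x₄, y₄) ∧ (x₃, y₃) ≠ (x₄, y₄) ∧
     e = {(i, x₁, y₁, z₁), (i, x₂, y₂, z₂), (i, x₃, y₃, z₃), (i, x₄, y₄, z₄)}) ∨
  -- type 3
  (∃ (i : ZMod m) (x₁ y₁' z₁' y₁'' z₁'' x₂' y₂' z₂' x₂'' y₂'' z₂'' : G2),
     y₁' ≠ y₁'' ∧ y₁' + y₁'' + x₂' + x₂'' = 0 ∧
     e = {(i, x₁, y₁', z₁'), (i, x₁, y₁'', z₁''),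
          (i + 1, x₂', y₂', z₂'), (i + 1, x₂'', y₂'', z₂'')}) ∨
  -- type 4a
  (∃ (i : ZMod m) (x₁ y₁ z₁' z₁'' x₂ y₂ z₂' z₂'' : G2),
     z₁' ≠ z₁'' ∧ z₂' ≠ z₂'' ∧ (x₁, y₁) ≠ (x₂, y₂) ∧
     e = {(i, x₁, y₁, z₁'), (i, x₁, y₁, z₁''),
          (i, x₂, y₂, z₂'), (i, x₂, y₂, z₂'')}) ∨
  -- type 4b
  (∃ (i : ZMod m) (x₁ y₁ z₁' z₁'' x₂ y₂' z₂' y₂'' z₂'' : G2),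
     z₁' ≠ z₁'' ∧ y₂' ≠ y₂'' ∧
     e = {(i, x₁, y₁, z₁'), (i, x₁, y₁, z₁''),
          (i + 2, x₂, y₂', z₂'), (i + 2, x₂, y₂'', z₂'')}) ∨
  -- type 4c
  (∃ (i : ZMod m) (x₁ y₁ z₁' z₁'' x₂' y₂' z₂' x₂'' y₂'' z₂'' : G2),
     z₁' ≠ z₁'' ∧ z₁' + z₁'' + x₂' + x₂'' = 0 ∧
     e = {(i, x₁, y₁, z₁'), (i, x₁, y₁, z₁''),
          (i + 3, x₂', y₂', z₂'), (i + 3, x₂'', y₂'', z₂'')}))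

/-- `A₃(i,x,y) = { z : (i,x,y,z) ∈ A }`. -/
def A3 {m : ℕ} (A : Finset (HVtx m)) (i : ZMod m) (x y : G2) : Finset G2 :=
  Finset.univ.filter fun z => (i, x, y, z) ∈ A

/-- `A₂(i,x) = { y : ∃ z, (i,x,y,z) ∈ A }`. -/
def A2 {m : ℕ} (A : Finset (HVtx m)) (i : ZMod m) (x : G2) : Finset G2 :=
  Finset.univ.filter fun y => ∃ z, (i, x, y, z) ∈ A

/-- `A₁(i) = { x : ∃ y z, (i,x,y,z) ∈ A }`. -/
def A1 {m : ℕ} (A : Finset (HVtx m)) (i : ZMod m) : Finset G2 :=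
  Finset.univ.filter fun x => (Finset.univ.filter fun y : G2 => (A3 A i x y).Nonempty).Nonempty

/-- `εᵢ(A) = ∑_{x,y} max{0, |A₃(i,x,y)| - 1}` (note `t - 1 = max{0, t-1}` in `ℕ`). -/
def epsi {m : ℕ} (A : Finset (HVtx m)) (i : ZMod m) : ℕ :=
  ∑ x : G2, ∑ y : G2, ((A3 A i x y).card - 1)

set_option linter.unusedSectionVars false
section Aux

variable {m : ℕ} [NeZero m] {A : Finset (HVtx m)}

lemma mem_A3' {i : ZMod m} {x y z : G2} : z ∈ A3 A i x y ↔ (i,x,y,z) ∈ A := by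
  simp [A3]

lemma mem_A2' {i : ZMod m} {x y : G2} : y ∈ A2 A i x ↔ ∃ z, (i,x,y,z) ∈ A := by
  simp [A2]

lemma mem_A1' {i : ZMod m} {x : G2} : x ∈ A1 A i ↔ ∃ y z, (i,x,y,z) ∈ A := by
  rw [A1, Finset.mem_filter, Finset.filter_nonempty_iff]
  simp only [Finset.mem_univ, true_and, Finset.Nonempty, mem_A3']

lemma card_four' {α : Type*} [DecidableEq α] {a b c d : α} (hab : a≠b) (hac : a≠c)
    (had : a≠d) (hbc : b≠c) (hbd : b≠d) (hcd : c≠d) :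
    ({a,b,c,d} : Finset α).card = 4 := by
  rw [card_insert_of_notMem (by simp [hab, hac, had]),
    card_insert_of_notMem (by simp [hbc, hbd]),
    card_insert_of_notMem (by simp [hcd]), card_singleton]

lemma cast_ne_zero' (hm : 4 ≤ m) {c : ℕ} (hc0 : 0 < c) (hc : c < 4) :
    ((c : ℕ) : ZMod m) ≠ 0 := by
  rw [Ne, ZMod.natCast_eq_zero_iff]
  intro h
  exact absurd (Nat.le_of_dvd hc0 h) (by omega)

section edges
variable (hA : ∀ e : Finset (HVtx m), IsHmEdge e → ¬ e ⊆ A)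
include hA

lemma no_type1 {i : ZMod m} {x y z₁ z₂ z₃ z₄ : G2}
    (h12 : z₁≠z₂) (h13 : z₁≠z₃) (h14 : z₁≠z₄) (h23 : z₂≠z₃) (h24 : z₂≠z₄) (h34 : z₃≠z₄)
    (m1 : (i,x,y,z₁) ∈ A) (m2 : (i,x,y,z₂) ∈ A) (m3 : (i,x,y,z₃) ∈ A)
    (m4 : (i,x,y,z₄) ∈ A) : False := by
  refine hA {(i,x,y,z₁),(i,x,y,z₂),(i,x,y,z₃),(i,x,y,z₄)}
    ⟨card_four' ?_ ?_ ?_ ?_ ?_ ?_, Or.inl ⟨i,x,y,z₁,z₂,z₃,z₄,rfl⟩⟩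
    (by simp [insert_subset_iff, m1, m2, m3, m4]) <;>
  simp [Prod.ext_iff, h12, h13, h14, h23, h24, h34]

lemma no_type2 {i : ZMod m} {x₁ y₁ z₁ x₂ y₂ z₂ x₃ y₃ z₃ x₄ y₄ z₄ : G2}
    (hsum : x₁ + x₂ + x₃ + x₄ = 0)
    (h12 : (x₁,y₁) ≠ (x₂,y₂)) (h13 : (x₁,y₁) ≠ (x₃,y₃)) (h14 : (x₁,y₁) ≠ (x₄,y₄))
    (h23 : (x₂,y₂) ≠ (x₃,y₃)) (h24 : (x₂,y₂) ≠ (x₄,y₄)) (h34 : (x₃,y₃) ≠ (x₄,y₄))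
    (m1 : (i,x₁,y₁,z₁) ∈ A) (m2 : (i,x₂,y₂,z₂) ∈ A) (m3 : (i,x₃,y₃,z₃) ∈ A)
    (m4 : (i,x₄,y₄,z₄) ∈ A) : False := by
  refine hA {(i,x₁,y₁,z₁),(i,x₂,y₂,z₂),(i,x₃,y₃,z₃),(i,x₄,y₄,z₄)}
    ⟨card_four' ?_ ?_ ?_ ?_ ?_ ?_,
      Or.inr (Or.inl ⟨i,x₁,y₁,z₁,x₂,y₂,z₂,x₃,y₃,z₃,x₄,y₄,z₄,hsum,
        h12,h13,h14,h23,h24,h34,rfl⟩)⟩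
    (by simp [insert_subset_iff, m1, m2, m3, m4]) <;>
  · simp only [Ne, Prod.mk.injEq, not_and] at *
    intro _ hx hy _
    first
    | exact h12 hx hy | exact h13 hx hy | exact h14 hx hy
    | exact h23 hx hy | exact h24 hx hy | exact h34 hx hy

lemma no_type3 (hm : 4 ≤ m) {i : ZMod m} {x y' z' y'' z'' a w₁ u₁ b w₂ u₂ : G2}
    (hy : y' ≠ y'') (hab : a ≠ b) (hsum : y' + y'' + a + b = 0)
    (m1 : (i,x,y',z') ∈ A) (m2 : (i,x,y'',z'') ∈ A)
    (m3 : (i+1,a,w₁,u₁) ∈ A) (m4 : (i+1,b,w₂,u₂) ∈ A) : False := by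
  have hi : i ≠ i + 1 := by
    intro h
    exact cast_ne_zero' hm (c := 1) (by norm_num) (by norm_num)
      (by push_cast; exact (left_eq_add.mp h).symm ▸ rfl)
  refine hA {(i,x,y',z'),(i,x,y'',z''),(i+1,a,w₁,u₁),(i+1,b,w₂,u₂)}
    ⟨card_four' ?_ ?_ ?_ ?_ ?_ ?_,
      Or.inr (Or.inr (Or.inl ⟨i,x,y',z',y'',z'',a,w₁,u₁,b,w₂,u₂,hy,hsum,rfl⟩))⟩
    (by simp [insert_subset_iff, m1, m2, m3, m4]) <;>
  simp [Prod.ext_iff, hy, hab, hi]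

lemma no_type4a {i : ZMod m} {x₁ y₁ z₁' z₁'' x₂ y₂ z₂' z₂'' : G2}
    (hz1 : z₁' ≠ z₁'') (hz2 : z₂' ≠ z₂'') (hxy : (x₁,y₁) ≠ (x₂,y₂))
    (m1 : (i,x₁,y₁,z₁') ∈ A) (m2 : (i,x₁,y₁,z₁'') ∈ A)
    (m3 : (i,x₂,y₂,z₂') ∈ A) (m4 : (i,x₂,y₂,z₂'') ∈ A) : False := by
  have hxy' : ¬ (x₁ = x₂ ∧ y₁ = y₂) := by
    intro h; exact hxy (by simp [h.1, h.2])
  refine hA {(i,x₁,y₁,z₁'),(i,x₁,y₁,z₁''),(i,x₂,y₂,z₂'),(i,x₂,y₂,z₂'')}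
    ⟨card_four' ?_ ?_ ?_ ?_ ?_ ?_,
      Or.inr (Or.inr (Or.inr (Or.inl ⟨i,x₁,y₁,z₁',z₁'',x₂,y₂,z₂',z₂'',hz1,hz2,hxy,rfl⟩)))⟩
    (by simp [insert_subset_iff, m1, m2, m3, m4]) <;>
  · simp only [Ne, Prod.mk.injEq, not_and]
    intro _ hx
    first
    | (exact fun hy _ => hxy' ⟨hx, hy⟩)
    | (exact fun _ => (hz1 hx).elim)
    | (exact fun _ hz => hz1 hz)
    | (exact fun _ hz => hz2 hz)

lemma no_type4b (hm : 4 ≤ m) {i : ZMod m} {x₁ y₁ z₁' z₁'' x₂ y₂' u₁ y₂'' u₂ : G2}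
    (hz : z₁' ≠ z₁'') (hy : y₂' ≠ y₂'')
    (m1 : (i,x₁,y₁,z₁') ∈ A) (m2 : (i,x₁,y₁,z₁'') ∈ A)
    (m3 : (i+2,x₂,y₂',u₁) ∈ A) (m4 : (i+2,x₂,y₂'',u₂) ∈ A) : False := by
  have hi : i ≠ i + 2 := by
    intro h
    exact cast_ne_zero' hm (c := 2) (by norm_num) (by norm_num)
      (by push_cast; exact (left_eq_add.mp h).symm ▸ rfl)
  refine hA {(i,x₁,y₁,z₁'),(i,x₁,y₁,z₁''),(i+2,x₂,y₂',u₁),(i+2,x₂,y₂'',u₂)}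
    ⟨card_four' ?_ ?_ ?_ ?_ ?_ ?_,
      Or.inr (Or.inr (Or.inr (Or.inr (Or.inl
        ⟨i,x₁,y₁,z₁',z₁'',x₂,y₂',u₁,y₂'',u₂,hz,hy,rfl⟩))))⟩
    (by simp [insert_subset_iff, m1, m2, m3, m4]) <;>
  simp [Prod.ext_iff, hz, hy, hi]

lemma no_type4c (hm : 4 ≤ m) {i : ZMod m} {x₁ y₁ z₁' z₁'' a w₁ u₁ b w₂ u₂ : G2}
    (hz : z₁' ≠ z₁'') (hab : a ≠ b) (hsum : z₁' + z₁'' + a + b = 0)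
    (m1 : (i,x₁,y₁,z₁') ∈ A) (m2 : (i,x₁,y₁,z₁'') ∈ A)
    (m3 : (i+3,a,w₁,u₁) ∈ A) (m4 : (i+3,b,w₂,u₂) ∈ A) : False := by
  have hi : i ≠ i + 3 := by
    intro h
    exact cast_ne_zero' hm (c := 3) (by norm_num) (by norm_num)
      (by push_cast; exact (left_eq_add.mp h).symm ▸ rfl)
  refine hA {(i,x₁,y₁,z₁'),(i,x₁,y₁,z₁''),(i+3,a,w₁,u₁),(i+3,b,w₂,u₂)}
    ⟨card_four' ?_ ?_ ?_ ?_ ?_ ?_,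
      Or.inr (Or.inr (Or.inr (Or.inr (Or.inr
        ⟨i,x₁,y₁,z₁',z₁'',a,w₁,u₁,b,w₂,u₂,hz,hsum,rfl⟩))))⟩
    (by simp [insert_subset_iff, m1, m2, m3, m4]) <;>
  simp [Prod.ext_iff, hz, hab, hi]

end edges
end Aux
lemma g2_add_self (x : G2) : x + x = 0 := by
  have h : ∀ a : ZMod 2, a + a = 0 := by decide
  exact Prod.ext (h x.1) (h x.2)

lemma g2_add_eq_zero : ∀ (a b : G2), a + b = 0 → a = b := by decide

lemma g2_cover : ∀ (a b c s : G2), a ≠ b → a ≠ c → b ≠ c → s ≠ 0 →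
    (a + b = s ∨ a + c = s ∨ b + c = s) := by decide

/-- `δᵢ(A) = ∑_x max{0, |A₂(i,x)| - 1}`. -/
def delA {m : ℕ} (A : Finset (HVtx m)) (i : ZMod m) : ℕ :=
  ∑ x : G2, ((A2 A i x).card - 1)

section Main
set_option linter.unusedSectionVars false
variable {m : ℕ} [NeZero m] {A : Finset (HVtx m)}
variable (hA : ∀ e : Finset (HVtx m), IsHmEdge e → ¬ e ⊆ A)
include hA

lemma A2_card_le (i : ZMod m) (x : G2) : (A2 A i x).card ≤ 3 := by
  by_contra h
  push_neg at h
  have h4 : A2 A i x = univ := by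
    apply Finset.eq_univ_of_card
    have := Finset.card_le_univ (A2 A i x)
    have hc : Fintype.card G2 = 4 := rfl
    omega
  have mm : ∀ y : G2, ∃ z, (i,x,y,z) ∈ A := fun y => mem_A2'.mp (h4 ▸ mem_univ y)
  obtain ⟨z₁, h1⟩ := mm (0,0)
  obtain ⟨z₂, h2⟩ := mm (0,1)
  obtain ⟨z₃, h3⟩ := mm (1,0)
  obtain ⟨z₄, h4'⟩ := mm (1,1)
  have hsum : x + x + x + x = 0 := by
    rw [g2_add_self, zero_add, g2_add_self]
  refine no_type2 hA hsum ?_ ?_ ?_ ?_ ?_ ?_ h1 h2 h3 h4' <;>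
  exact fun h => by injection h with h1 h2; exact absurd h2 (by decide)

lemma A2_unique (i : ZMod m) {x x' : G2} (hx : x ≠ x')
    (h2 : 2 ≤ (A2 A i x).card) (h2' : 2 ≤ (A2 A i x').card) : False := by
  obtain ⟨y₁, hy₁, y₂, hy₂, hy12⟩ := Finset.one_lt_card.mp h2
  obtain ⟨y₃, hy₃, y₄, hy₄, hy34⟩ := Finset.one_lt_card.mp h2'
  obtain ⟨z₁, h1⟩ := mem_A2'.mp hy₁
  obtain ⟨z₂, h2''⟩ := mem_A2'.mp hy₂
  obtain ⟨z₃, h3⟩ := mem_A2'.mp hy₃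
  obtain ⟨z₄, h4⟩ := mem_A2'.mp hy₄
  have hsum : x + x + x' + x' = 0 := by
    rw [g2_add_self, zero_add, g2_add_self]
  exact no_type2 hA hsum (by simp [hy12]) (by simp [Prod.ext_iff, hx])
    (by simp [Prod.ext_iff, hx]) (by simp [Prod.ext_iff, hx])
    (by simp [Prod.ext_iff, hx]) (by simp [hy34]) h1 h2'' h3 h4

lemma A1_card_le (i : ZMod m) : (A1 A i).card ≤ 3 := by
  by_contra h
  push_neg at h
  have h4 : A1 A i = univ := by
    apply Finset.eq_univ_of_card
    have := Finset.card_le_univ (A1 A i)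
    have hc : Fintype.card G2 = 4 := rfl
    omega
  have mm : ∀ x : G2, ∃ y z, (i,x,y,z) ∈ A := fun x => mem_A1'.mp (h4 ▸ mem_univ x)
  obtain ⟨y₁, z₁, h1⟩ := mm (0,0)
  obtain ⟨y₂, z₂, h2⟩ := mm (0,1)
  obtain ⟨y₃, z₃, h3⟩ := mm (1,0)
  obtain ⟨y₄, z₄, h4'⟩ := mm (1,1)
  refine no_type2 hA (by decide) ?_ ?_ ?_ ?_ ?_ ?_ h1 h2 h3 h4' <;>
  exact fun h => by injection h with h1 h2; exact absurd h1 (by decide)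

lemma A3_card_le (i : ZMod m) (x y : G2) : (A3 A i x y).card ≤ 3 := by
  by_contra h
  push_neg at h
  have h4 : A3 A i x y = univ := by
    apply Finset.eq_univ_of_card
    have := Finset.card_le_univ (A3 A i x y)
    have hc : Fintype.card G2 = 4 := rfl
    omega
  have mm : ∀ z : G2, (i,x,y,z) ∈ A := fun z => mem_A3'.mp (h4 ▸ mem_univ z)
  exact no_type1 hA (z₁ := (0,0)) (z₂ := (0,1)) (z₃ := (1,0)) (z₄ := (1,1))
    (by decide) (by decide) (by decide) (by decide) (by decide) (by decide)
    (mm _) (mm _) (mm _) (mm _)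

lemma A3_unique (i : ZMod m) {p q : G2 × G2} (hpq : p ≠ q)
    (h2 : 2 ≤ (A3 A i p.1 p.2).card) (h2' : 2 ≤ (A3 A i q.1 q.2).card) : False := by
  obtain ⟨z₁, hz₁, z₂, hz₂, hz12⟩ := Finset.one_lt_card.mp h2
  obtain ⟨z₃, hz₃, z₄, hz₄, hz34⟩ := Finset.one_lt_card.mp h2'
  exact no_type4a hA hz12 hz34 (by simpa using hpq)
    (mem_A3'.mp hz₁) (mem_A3'.mp hz₂) (mem_A3'.mp hz₃) (mem_A3'.mp hz₄)

lemma del_single (i : ZMod m) (h : 1 ≤ delA A i) :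
    ∃ x, 2 ≤ (A2 A i x).card ∧ delA A i = (A2 A i x).card - 1 := by
  have h0 : ∃ x ∈ (univ : Finset G2), (A2 A i x).card - 1 ≠ 0 := by
    by_contra hc
    push_neg at hc
    have : delA A i = 0 := Finset.sum_eq_zero hc
    omega
  obtain ⟨x, -, hx⟩ := h0
  refine ⟨x, by omega, ?_⟩
  rw [delA]
  apply Finset.sum_eq_single x (fun b _ hb => ?_) (fun h => (h (mem_univ x)).elim)
  by_contra hb0
  exact A2_unique hA i hb (by omega) (by omega)

lemma eps_single (i : ZMod m) (h : 1 ≤ epsi A i) :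
    ∃ x y, 2 ≤ (A3 A i x y).card ∧ epsi A i = (A3 A i x y).card - 1 := by
  have he : epsi A i = ∑ p : G2 × G2, ((A3 A i p.1 p.2).card - 1) := by
    simp only [epsi]
    exact (Fintype.sum_prod_type
      (fun p : G2 × G2 => ((A3 A i p.1 p.2).card - 1))).symm
  have h0 : ∃ p ∈ (univ : Finset (G2 × G2)), (A3 A i p.1 p.2).card - 1 ≠ 0 := by
    by_contra hc
    push_neg at hc
    have : epsi A i = 0 := by rw [he]; exact Finset.sum_eq_zero hc
    omega
  obtain ⟨p, -, hp⟩ := h0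
  refine ⟨p.1, p.2, by omega, ?_⟩
  rw [he]
  apply Finset.sum_eq_single p (fun q _ hq => ?_) (fun h => (h (mem_univ p)).elim)
  by_contra hq0
  exact A3_unique hA i hq (by omega) (by omega)

lemma del_le_two (i : ZMod m) : delA A i ≤ 2 := by
  rcases Nat.eq_zero_or_pos (delA A i) with h | h
  · omega
  obtain ⟨x, hx, heq⟩ := del_single hA i h
  have := A2_card_le hA i x
  omega

lemma eps_le_two (i : ZMod m) : epsi A i ≤ 2 := by
  rcases Nat.eq_zero_or_pos (epsi A i) with h | h
  · omega
  obtain ⟨x, y, hx, heq⟩ := eps_single hA i h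
  have := A3_card_le hA i x y
  omega

lemma noT3' (hm : 4 ≤ m) (i : ZMod m) {x y' y'' a b : G2} (hy : y' ≠ y'') (hab : a ≠ b)
    (h : a + b = y' + y'')
    (hy1 : y' ∈ A2 A i x) (hy2 : y'' ∈ A2 A i x)
    (ha : a ∈ A1 A (i+1)) (hb : b ∈ A1 A (i+1)) : False := by
  obtain ⟨z', hz'⟩ := mem_A2'.mp hy1
  obtain ⟨z'', hz''⟩ := mem_A2'.mp hy2
  obtain ⟨w₁, u₁, h₁⟩ := mem_A1'.mp ha
  obtain ⟨w₂, u₂, h₂⟩ := mem_A1'.mp hb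
  exact no_type3 hA hm hy hab (by rw [add_assoc, h]; exact g2_add_self _) hz' hz'' h₁ h₂

lemma noT4c' (hm : 4 ≤ m) (i : ZMod m) {x y z' z'' a b : G2} (hz : z' ≠ z'') (hab : a ≠ b)
    (h : a + b = z' + z'')
    (hz1 : z' ∈ A3 A i x y) (hz2 : z'' ∈ A3 A i x y)
    (ha : a ∈ A1 A (i+3)) (hb : b ∈ A1 A (i+3)) : False := by
  obtain ⟨w₁, u₁, h₁⟩ := mem_A1'.mp ha
  obtain ⟨w₂, u₂, h₂⟩ := mem_A1'.mp hb
  exact no_type4c hA hm hz hab (by rw [add_assoc, h]; exact g2_add_self _)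
    (mem_A3'.mp hz1) (mem_A3'.mp hz2) h₁ h₂

lemma ineq_I (hm : 4 ≤ m) (i : ZMod m) : delA A i + (A1 A (i+1)).card ≤ 3 := by
  rcases Nat.eq_zero_or_pos (delA A i) with h0 | h1
  · rw [h0, zero_add]; exact A1_card_le hA _
  obtain ⟨x, hx2, hxe⟩ := del_single hA i h1
  obtain ⟨y', hy', y'', hy'', hyne⟩ := Finset.one_lt_card.mp hx2
  have hk2 : (A1 A (i+1)).card ≤ 2 := by
    by_contra hk
    push_neg at hk
    obtain ⟨a, b, c, ha, hb, hc, hab, hac, hbc⟩ := Finset.two_lt_card_iff.mp hk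
    have hs : y' + y'' ≠ 0 := fun h => hyne (g2_add_eq_zero _ _ h)
    rcases g2_cover a b c (y' + y'') hab hac hbc hs with h | h | h
    · exact noT3' hA hm i hyne hab h hy' hy'' ha hb
    · exact noT3' hA hm i hyne hac h hy' hy'' ha hc
    · exact noT3' hA hm i hyne hbc h hy' hy'' hb hc
  rcases Nat.lt_or_ge (delA A i) 2 with h | h
  · omega
  have hx3 : 3 ≤ (A2 A i x).card := by omega
  obtain ⟨y₁, y₂, y₃, h1', h2', h3', h12, h13, h23⟩ := Finset.two_lt_card_iff.mp hx3
  have hk1 : (A1 A (i+1)).card ≤ 1 := by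
    by_contra hk
    push_neg at hk
    obtain ⟨a, ha, b, hb, hab⟩ := Finset.one_lt_card.mp hk
    have hs : a + b ≠ 0 := fun h => hab (g2_add_eq_zero _ _ h)
    rcases g2_cover y₁ y₂ y₃ (a + b) h12 h13 h23 hs with h | h | h
    · exact noT3' hA hm i h12 hab h.symm h1' h2' ha hb
    · exact noT3' hA hm i h13 hab h.symm h1' h3' ha hb
    · exact noT3' hA hm i h23 hab h.symm h2' h3' ha hb
  have := A2_card_le hA i x
  omega

lemma ineq_II (hm : 4 ≤ m) (i : ZMod m) : epsi A i + (A1 A (i+3)).card ≤ 3 := by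
  rcases Nat.eq_zero_or_pos (epsi A i) with h0 | h1
  · rw [h0, zero_add]; exact A1_card_le hA _
  obtain ⟨x, y, hx2, hxe⟩ := eps_single hA i h1
  obtain ⟨z', hz', z'', hz'', hzne⟩ := Finset.one_lt_card.mp hx2
  have hk2 : (A1 A (i+3)).card ≤ 2 := by
    by_contra hk
    push_neg at hk
    obtain ⟨a, b, c, ha, hb, hc, hab, hac, hbc⟩ := Finset.two_lt_card_iff.mp hk
    have hs : z' + z'' ≠ 0 := fun h => hzne (g2_add_eq_zero _ _ h)
    rcases g2_cover a b c (z' + z'') hab hac hbc hs with h | h | h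
    · exact noT4c' hA hm i hzne hab h hz' hz'' ha hb
    · exact noT4c' hA hm i hzne hac h hz' hz'' ha hc
    · exact noT4c' hA hm i hzne hbc h hz' hz'' hb hc
  rcases Nat.lt_or_ge (epsi A i) 2 with h | h
  · omega
  have hx3 : 3 ≤ (A3 A i x y).card := by omega
  obtain ⟨z₁, z₂, z₃, h1', h2', h3', h12, h13, h23⟩ := Finset.two_lt_card_iff.mp hx3
  have hk1 : (A1 A (i+3)).card ≤ 1 := by
    by_contra hk
    push_neg at hk
    obtain ⟨a, ha, b, hb, hab⟩ := Finset.one_lt_card.mp hk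
    have hs : a + b ≠ 0 := fun h => hab (g2_add_eq_zero _ _ h)
    rcases g2_cover z₁ z₂ z₃ (a + b) h12 h13 h23 hs with h | h | h
    · exact noT4c' hA hm i h12 hab h.symm h1' h2' ha hb
    · exact noT4c' hA hm i h13 hab h.symm h1' h3' ha hb
    · exact noT4c' hA hm i h23 hab h.symm h2' h3' ha hb
  have := A3_card_le hA i x y
  omega

lemma ineq_III (hm : 4 ≤ m) (i : ZMod m) (h : 1 ≤ epsi A i) : delA A (i+2) = 0 := by
  by_contra hd
  obtain ⟨x, y, hx2, -⟩ := eps_single hA i h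
  obtain ⟨z', hz', z'', hz'', hzne⟩ := Finset.one_lt_card.mp hx2
  obtain ⟨x₂, hx₂, -⟩ := del_single hA (i+2) (by omega)
  obtain ⟨y', hy', y'', hy'', hyne⟩ := Finset.one_lt_card.mp hx₂
  obtain ⟨u₁, hu₁⟩ := mem_A2'.mp hy'
  obtain ⟨u₂, hu₂⟩ := mem_A2'.mp hy''
  exact no_type4b hA hm hzne hyne (mem_A3'.mp hz') (mem_A3'.mp hz'') hu₁ hu₂

lemma split_sum (i : ZMod m) :
    ∑ x : G2, (A2 A i x).card = (A1 A i).card + delA A i := by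
  have hterm : ∀ x : G2,
      (A2 A i x).card = (if x ∈ A1 A i then 1 else 0) + ((A2 A i x).card - 1) := by
    intro x
    by_cases hx : x ∈ A1 A i
    · have hne : (A2 A i x).Nonempty := by
        obtain ⟨y, z, h⟩ := mem_A1'.mp hx
        exact ⟨y, mem_A2'.mpr ⟨z, h⟩⟩
      have := Finset.card_pos.mpr hne
      simp only [hx, if_pos]
      omega
    · have hempty : A2 A i x = ∅ := by
        rw [Finset.eq_empty_iff_forall_notMem]
        intro y hy
        obtain ⟨z, hz⟩ := mem_A2'.mp hy
        exact hx (mem_A1'.mpr ⟨y, z, hz⟩)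
      simp [hx, hempty]
  calc ∑ x : G2, (A2 A i x).card
      = ∑ x : G2, ((if x ∈ A1 A i then 1 else 0) + ((A2 A i x).card - 1)) :=
        Finset.sum_congr rfl fun x _ => hterm x
    _ = (∑ x : G2, if x ∈ A1 A i then 1 else 0) + delA A i := Finset.sum_add_distrib
    _ = (A1 A i).card + delA A i := by
        congr 1
        simp [Finset.sum_ite_mem]

lemma key_ineq (hm : 4 ≤ m) (i : ZMod m) :
    epsi A i + delA A (i+2) + (A1 A (i+3)).card
      ≤ 2 + (if (A1 A (i+3)).Nonempty then 1 else 0) := by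
  have h23 : i + 2 + 1 = i + 3 := by ring
  have hI : delA A (i+2) + (A1 A (i+3)).card ≤ 3 := by
    have := ineq_I hA hm (i+2); rwa [h23] at this
  have hII := ineq_II hA hm i
  have hd2 := del_le_two hA (i+2)
  have he2 := eps_le_two hA i
  by_cases hnon : (A1 A (i+3)).Nonempty
  · rw [if_pos hnon]
    by_cases he : 1 ≤ epsi A i
    · have h0 := ineq_III hA hm i he
      omega
    · omega
  · have h0 : (A1 A (i+3)).card = 0 :=
      Finset.card_eq_zero.mpr (Finset.not_nonempty_iff_eq_empty.mp hnon)
    rw [if_neg hnon]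
    by_cases he : 1 ≤ epsi A i
    · have := ineq_III hA hm i he
      omega
    · omega

end Main

theorem stmt_14 (m : ℕ) [NeZero m] (hm : 4 ≤ m)
    (A : Finset (HVtx m))
    (hA : ∀ e : Finset (HVtx m), IsHmEdge e → ¬ e ⊆ A) :
    (∑ i : ZMod m, epsi A i) + ∑ i : ZMod m, ∑ x : G2, (A2 A i x).card
      ≤ 2 * m + ∑ i : ZMod m, (if (A1 A i).Nonempty then 1 else 0) := by
  have r1 : ∑ i : ZMod m, (A1 A (i+3)).card = ∑ i : ZMod m, (A1 A i).card :=
    Fintype.sum_equiv (Equiv.addRight (3 : ZMod m)) _ _ (fun i => rfl)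
  have r2 : ∑ i : ZMod m, delA A (i+2) = ∑ i : ZMod m, delA A i :=
    Fintype.sum_equiv (Equiv.addRight (2 : ZMod m)) _ _ (fun i => rfl)
  have r3 : ∑ i : ZMod m, (if (A1 A (i+3)).Nonempty then (1:ℕ) else 0)
      = ∑ i : ZMod m, (if (A1 A i).Nonempty then 1 else 0) :=
    Fintype.sum_equiv (Equiv.addRight (3 : ZMod m)) _ _ (fun i => rfl)
  have hmain : ∑ i : ZMod m, (epsi A i + delA A (i+2) + (A1 A (i+3)).card)
      ≤ ∑ i : ZMod m, (2 + if (A1 A (i+3)).Nonempty then 1 else 0) :=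
    Finset.sum_le_sum fun i _ => key_ineq hA hm i
  have hsplit : ∑ i : ZMod m, ∑ x : G2, (A2 A i x).card
      = (∑ i : ZMod m, (A1 A i).card) + ∑ i : ZMod m, delA A i := by
    rw [← Finset.sum_add_distrib]
    exact Finset.sum_congr rfl fun i _ => split_sum hA i
  have hL : ∑ i : ZMod m, (epsi A i + delA A (i+2) + (A1 A (i+3)).card)
      = (∑ i : ZMod m, epsi A i) + ∑ i : ZMod m, ∑ x : G2, (A2 A i x).card := by
    rw [Finset.sum_add_distrib, Finset.sum_add_distrib, r1, r2, hsplit]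
    ring
  have hR : ∑ i : ZMod m, ((2:ℕ) + if (A1 A (i+3)).Nonempty then 1 else 0)
      = 2 * m + ∑ i : ZMod m, (if (A1 A i).Nonempty then 1 else 0) := by
    rw [Finset.sum_add_distrib, r3, Finset.sum_const, Finset.card_univ, ZMod.card,
      smul_eq_mul, mul_comm]
  rw [← hL, ← hR]
  exact hmain
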